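/- arXiv:2212.13321 — 3 statements merged into one kernel-verified Lean document; each statement's English description precedes it below -/
import Mathlib

section
/- Let γ > 1 and let f : (0,1) → ℝ be continuous and bounded. Suppose u : (0,1) → ℝ is twice differentiable and satisfies x u''(x) + γ u'(x) = f(x) for all x ∈ (0,1), and that sup_{x ∈ (0,1)} |x u'(x)| < ∞. Then sup_{x ∈ (0,1)} |u'(x)| ≤ (1/γ) sup_{x ∈ (0,1)} |f(x)| and sup_{x ∈ (0,1)} |x u''(x)| ≤ 2 sup_{x ∈ (0,1)} |f(x)|. -/
open Set Filter

/-- One-sided key estimate: if `x u'' + γ u' = f` with `f ≤ M` and `x u'` bounded,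
then `x^γ u' x ≤ (M/γ) x^γ` on `(0,1)`. -/
lemma degenerate_ode_one_sided
    (γ : ℝ) (hγ : 1 < γ)
    (f u' u'' : ℝ → ℝ)
    (M : ℝ) (hM0 : 0 ≤ M) (hM : ∀ x ∈ Ioo (0 : ℝ) 1, f x ≤ M)
    (hu'' : ∀ x ∈ Ioo (0 : ℝ) 1, HasDerivAt u' (u'' x) x)
    (heq : ∀ x ∈ Ioo (0 : ℝ) 1, x * u'' x + γ * u' x = f x)
    (C : ℝ) (hC : ∀ x ∈ Ioo (0 : ℝ) 1, |x * u' x| ≤ C) :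
    ∀ x ∈ Ioo (0 : ℝ) 1, x ^ γ * u' x ≤ (M / γ) * x ^ γ := by
  have hγ0 : (0:ℝ) < γ := by linarith
  set φ : ℝ → ℝ := fun t => (M / γ) * t ^ γ - t ^ γ * u' t with hφdef
  -- derivative of φ on (0,1)
  have hφ : ∀ t ∈ Ioo (0 : ℝ) 1, HasDerivAt φ (t ^ (γ - 1) * (M - f t)) t := by
    intro t ht
    have ht0 : (0:ℝ) < t := ht.1
    have hpow : HasDerivAt (fun x : ℝ => x ^ γ) (γ * t ^ (γ - 1)) t :=
      Real.hasDerivAt_rpow_const (Or.inl ht0.ne')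
    have h1 : HasDerivAt (fun x : ℝ => (M / γ) * x ^ γ) ((M / γ) * (γ * t ^ (γ - 1))) t :=
      hpow.const_mul _
    have h2 : HasDerivAt (fun x : ℝ => x ^ γ * u' x)
        (γ * t ^ (γ - 1) * u' t + t ^ γ * u'' t) t :=
      hpow.mul (hu'' t ht)
    have := h1.sub h2
    convert this using 1
    case e'_4 => rfl
    case e'_5 => rfl
    case e'_8 => rfl
    have htg : t ^ γ = t ^ (γ - 1) * t := by
      rw [← Real.rpow_add_one ht0.ne']; ring_nf
    have heqt := heq t ht
    rw [htg, ← heqt]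
    field_simp
    ring
  have hmono : MonotoneOn φ (Ioo (0:ℝ) 1) := by
    apply monotoneOn_of_deriv_nonneg (convex_Ioo 0 1)
    · intro t ht; exact (hφ t ht).continuousAt.continuousWithinAt
    · rw [interior_Ioo]; intro t ht
      exact (hφ t ht).differentiableAt.differentiableWithinAt
    · rw [interior_Ioo]; intro t ht
      rw [(hφ t ht).deriv]
      have : (0:ℝ) ≤ t ^ (γ - 1) := Real.rpow_nonneg ht.1.le _
      have := hM t ht
      nlinarith
  intro x hx
  have hx0 : (0:ℝ) < x := hx.1
  -- for a ∈ (0, x), monotonicity gives a bound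
  have key : ∀ a ∈ Ioo (0:ℝ) x, x ^ γ * u' x ≤ C * a ^ (γ - 1) + (M / γ) * x ^ γ := by
    intro a ha
    have ha' : a ∈ Ioo (0:ℝ) 1 := ⟨ha.1, ha.2.trans hx.2⟩
    have := hmono ha' hx ha.2.le
    -- φ a ≤ φ x
    have hga : a ^ γ * u' a ≤ C * a ^ (γ - 1) := by
      have hag : a ^ γ = a ^ (γ - 1) * a := by
        rw [← Real.rpow_add_one ha.1.ne']; ring_nf
      have h1 : |a * u' a| ≤ C := hC a ha'
      have h2 : (0:ℝ) ≤ a ^ (γ - 1) := Real.rpow_nonneg ha.1.le _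
      calc a ^ γ * u' a = a ^ (γ - 1) * (a * u' a) := by rw [hag]; ring
        _ ≤ a ^ (γ - 1) * C := by
            exact mul_le_mul_of_nonneg_left ((le_abs_self _).trans h1) h2
        _ = C * a ^ (γ - 1) := by ring
    have h3 : (0:ℝ) ≤ a ^ γ := Real.rpow_nonneg ha.1.le _
    have hMγ : (0:ℝ) ≤ M / γ := div_nonneg hM0 hγ0.le
    simp only [hφdef] at this
    nlinarith
  -- take the limit a → 0⁺
  have hlim : Tendsto (fun a : ℝ => C * a ^ (γ - 1) + (M / γ) * x ^ γ)
      (nhdsWithin 0 (Ioi 0)) (nhds (C * 0 + (M / γ) * x ^ γ)) := by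
    apply Tendsto.add _ tendsto_const_nhds
    apply Tendsto.const_mul
    have hcont : ContinuousAt (fun a : ℝ => a ^ (γ - 1)) 0 :=
      Real.continuousAt_rpow_const 0 (γ - 1) (Or.inr (by linarith))
    have h0 : (0:ℝ) ^ (γ - 1) = 0 := Real.zero_rpow (by linarith)
    have := hcont.tendsto.mono_left (nhdsWithin_le_nhds (s := Ioi (0:ℝ)))
    rwa [h0] at this
  have hev : ∀ᶠ a in nhdsWithin (0:ℝ) (Ioi 0),
      x ^ γ * u' x ≤ C * a ^ (γ - 1) + (M / γ) * x ^ γ := by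
    filter_upwards [Ioo_mem_nhdsGT_of_mem (Set.mem_Ico.mpr ⟨le_refl 0, hx0⟩)] with a ha
    exact key a ha
  have := ge_of_tendsto hlim hev
  linarith [this]

/-- Degenerate ODE estimate: if `x u'' + γ u' = f` on `(0,1)` with `γ > 1`, `f` continuous
and bounded by `M`, and `x u'` bounded, then `|u'| ≤ M/γ` and `|x u''| ≤ 2M` on `(0,1)`. -/
theorem degenerate_ode_estimate
    (γ : ℝ) (hγ : 1 < γ)
    (f u u' u'' : ℝ → ℝ)
    (hf : ContinuousOn f (Ioo 0 1))
    (M : ℝ) (hM : ∀ x ∈ Ioo (0 : ℝ) 1, |f x| ≤ M)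
    (hu' : ∀ x ∈ Ioo (0 : ℝ) 1, HasDerivAt u (u' x) x)
    (hu'' : ∀ x ∈ Ioo (0 : ℝ) 1, HasDerivAt u' (u'' x) x)
    (heq : ∀ x ∈ Ioo (0 : ℝ) 1, x * u'' x + γ * u' x = f x)
    (hbdd : ∃ C : ℝ, ∀ x ∈ Ioo (0 : ℝ) 1, |x * u' x| ≤ C) :
    (∀ x ∈ Ioo (0 : ℝ) 1, |u' x| ≤ (1 / γ) * M) ∧
    (∀ x ∈ Ioo (0 : ℝ) 1, |x * u'' x| ≤ 2 * M) := by
  obtain ⟨C, hC⟩ := hbdd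
  have hγ0 : (0:ℝ) < γ := by linarith
  have hM0 : 0 ≤ M := by
    have := hM (1/2) (by norm_num)
    have := abs_nonneg (f (1/2)); linarith
  have hup : ∀ x ∈ Ioo (0:ℝ) 1, x ^ γ * u' x ≤ (M / γ) * x ^ γ :=
    degenerate_ode_one_sided γ hγ f u' u'' M hM0
      (fun x hx => (abs_le.mp (hM x hx)).2) hu'' heq C hC
  have hdown : ∀ x ∈ Ioo (0:ℝ) 1, x ^ γ * (-u' x) ≤ (M / γ) * x ^ γ := by
    apply degenerate_ode_one_sided γ hγ (fun x => -f x) (fun x => -u' x)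
      (fun x => -u'' x) M hM0
    · intro x hx
      have := (abs_le.mp (hM x hx)).1; linarith
    · intro x hx; exact (hu'' x hx).neg
    · intro x hx; have := heq x hx; simp; linarith
    · intro x hx
      have := hC x hx
      rwa [mul_comm, neg_mul, abs_neg, mul_comm]
  have hbound : ∀ x ∈ Ioo (0:ℝ) 1, |u' x| ≤ (1 / γ) * M := by
    intro x hx
    have hxg : (0:ℝ) < x ^ γ := Real.rpow_pos_of_pos hx.1 _
    have h1 := hup x hx
    have h2 := hdown x hx
    have hA : u' x ≤ M / γ := by nlinarith
    have hB : -u' x ≤ M / γ := by nlinarith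
    have hMγeq : (1 / γ) * M = M / γ := by ring
    rw [abs_le]
    constructor <;> linarith
  refine ⟨hbound, fun x hx => ?_⟩
  have h1 := hbound x hx
  have h2 := hM x hx
  have h3 := heq x hx
  have h4 : |x * u'' x| = |f x - γ * u' x| := by rw [← h3]; ring_nf
  rw [h4]
  have h5 : |f x - γ * u' x| ≤ |f x| + γ * |u' x| := by
    calc |f x - γ * u' x| ≤ |f x| + |γ * u' x| := abs_sub _ _
      _ = |f x| + γ * |u' x| := by rw [abs_mul, abs_of_pos hγ0]
  have h6 : γ * |u' x| ≤ M := by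
    have := mul_le_mul_of_nonneg_left h1 hγ0.le
    calc γ * |u' x| ≤ γ * ((1/γ) * M) := this
      _ = M := by field_simp
  linarith
end

section
/- For every x' ∈ ℝ^{n−1} and all s, t > 0, the intrinsic distance on the upper half-space satisfies d((x', t), (x', s)) = 2 |√t − √s|. -/
open MeasureTheory Metric Set Filter Topology

noncomputable section

/-- The intrinsic distance on the upper half-space `ℝⁿ₊`, induced by the Riemannian
metric `g_x(v,w) = x_n⁻¹ v·w`: the infimum of the lengths
`∫_a^b |γ'(t)| (γ_n(t))^{-1/2} dt` over `C¹` paths in `ℝⁿ₊` joining `x` to `y`. -/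
def intrinsicDist (n : ℕ) (hn : 1 ≤ n)
    (x y : EuclideanSpace ℝ (Fin n)) : ℝ :=
  sInf {L : ℝ | ∃ (a b : ℝ) (γ : ℝ → EuclideanSpace ℝ (Fin n)),
    a ≤ b ∧ ContDiffOn ℝ 1 γ (Icc a b) ∧
    (∀ t ∈ Icc a b, 0 < γ t ⟨n - 1, by omega⟩) ∧
    γ a = x ∧ γ b = y ∧
    L = ∫ t in a..b, ‖derivWithin γ (Icc a b) t‖ *
          (γ t ⟨n - 1, by omega⟩) ^ (-(1 : ℝ) / 2)}

lemma coord_abs_le_norm {n : ℕ} (v : EuclideanSpace ℝ (Fin n)) (i : Fin n) : |v i| ≤ ‖v‖ := by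
  rw [EuclideanSpace.norm_eq]
  rw [← Real.sqrt_sq (abs_nonneg (v i))]
  apply Real.sqrt_le_sqrt
  rw [sq_abs]
  have : (v i) ^ 2 = ‖v i‖ ^ 2 := by rw [Real.norm_eq_abs, sq_abs]
  rw [this]
  exact Finset.single_le_sum (f := fun j => ‖v j‖ ^ 2) (fun j _ => sq_nonneg _) (Finset.mem_univ i)

lemma lower_bound {n : ℕ} (i : Fin n) (a b : ℝ) (γ : ℝ → EuclideanSpace ℝ (Fin n))
    (hab : a ≤ b) (hγ : ContDiffOn ℝ 1 γ (Icc a b))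
    (hpos : ∀ t ∈ Icc a b, 0 < γ t i) :
    2 * |Real.sqrt (γ a i) - Real.sqrt (γ b i)| ≤
      ∫ t in a..b, ‖derivWithin γ (Icc a b) t‖ * (γ t i) ^ (-(1 : ℝ) / 2) := by
  rcases eq_or_lt_of_le hab with rfl | hab'
  · simp
  have hud : UniqueDiffOn ℝ (Icc a b) := uniqueDiffOn_Icc hab'
  set γ' : ℝ → EuclideanSpace ℝ (Fin n) := fun t => derivWithin γ (Icc a b) t with hγ'
  have hγ'cont : ContinuousOn γ' (Icc a b) := hγ.continuousOn_derivWithin hud le_rfl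
  have hγcont : ContinuousOn γ (Icc a b) := hγ.continuousOn
  -- f t = γ t i
  set f : ℝ → ℝ := fun t => γ t i with hf
  have hfcont : ContinuousOn f (Icc a b) := by
    exact (EuclideanSpace.proj i).continuous.comp_continuousOn hγcont
  -- the candidate derivative of 2 * sqrt (f t)
  set g' : ℝ → ℝ := fun t => (γ' t i) * (f t) ^ (-(1:ℝ)/2) with hg'
  have hg'cont : ContinuousOn g' (Icc a b) := by
    apply ContinuousOn.mul
    · exact (EuclideanSpace.proj i).continuous.comp_continuousOn hγ'cont
    · apply ContinuousOn.rpow_const hfcont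
      intro t ht; exact Or.inl (hpos t ht).ne'
  have key : ∀ t ∈ Ioo a b, HasDerivAt (fun u => 2 * Real.sqrt (f u)) (g' t) t := by
    intro t ht
    have htm : Icc a b ∈ 𝓝 t := Icc_mem_nhds ht.1 ht.2
    have hγd : HasDerivAt γ (γ' t) t := by
      have := (hγ.differentiableOn one_ne_zero t (Ioo_subset_Icc_self ht)).hasDerivWithinAt
      exact this.hasDerivAt htm
    have hfd : HasDerivAt f (γ' t i) t := by
      have := (EuclideanSpace.proj i).hasFDerivAt.comp_hasDerivAt t hγd
      exact this
    have hft : 0 < f t := hpos t (Ioo_subset_Icc_self ht)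
    have hsq : HasDerivAt (fun u => Real.sqrt (f u)) (1 / (2 * Real.sqrt (f t)) * (γ' t i)) t :=
      (Real.hasDerivAt_sqrt hft.ne').comp t hfd
    have := hsq.const_mul (2 : ℝ)
    refine this.congr_deriv (Eq.symm ?_)
    show γ' t i * f t ^ (-(1:ℝ)/2) = _
    have hs : Real.sqrt (f t) ≠ 0 := (Real.sqrt_pos.mpr hft).ne'
    have hrw : (f t) ^ (-(1:ℝ)/2) = (Real.sqrt (f t))⁻¹ := by
      rw [show (-(1:ℝ)/2) = -(1/2) by ring, Real.rpow_neg hft.le, ← Real.sqrt_eq_rpow]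
    rw [hrw]
    field_simp
  have hint : IntervalIntegrable g' volume a b := by
    apply ContinuousOn.intervalIntegrable
    rwa [uIcc_of_le hab]
  have hcont2 : ContinuousOn (fun u => 2 * Real.sqrt (f u)) (Icc a b) :=
    (Real.continuous_sqrt.comp_continuousOn hfcont).const_smul (2:ℝ) |>.congr (fun t _ => by simp [smul_eq_mul])
  have ftc : ∫ t in a..b, g' t = 2 * Real.sqrt (f b) - 2 * Real.sqrt (f a) :=
    intervalIntegral.integral_eq_sub_of_hasDerivAt_of_le hab hcont2 key hint
  have h1 : 2 * |Real.sqrt (γ a i) - Real.sqrt (γ b i)| = |∫ t in a..b, g' t| := by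
    rw [ftc, abs_sub_comm]
    rw [show 2 * Real.sqrt (f b) - 2 * Real.sqrt (f a)
        = 2 * (Real.sqrt (γ b i) - Real.sqrt (γ a i)) by ring, abs_mul, abs_two]
  rw [h1]
  have h2 : |∫ t in a..b, g' t| ≤ ∫ t in a..b, |g' t| :=
    intervalIntegral.abs_integral_le_integral_abs hab
  refine h2.trans ?_
  apply intervalIntegral.integral_mono_on hab
  · exact (hint.abs)
  · apply ContinuousOn.intervalIntegrable
    rw [uIcc_of_le hab]
    apply ContinuousOn.mul (hγ'cont.norm)
    apply ContinuousOn.rpow_const hfcont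
    intro t ht; exact Or.inl (hpos t ht).ne'
  · intro t ht
    rw [hg', abs_mul, abs_of_nonneg (Real.rpow_nonneg (hpos t ht).le _)]
    exact mul_le_mul_of_nonneg_right (coord_abs_le_norm _ _) (Real.rpow_nonneg (hpos t ht).le _)


lemma upper_calc {n : ℕ} (i : Fin n) (x y : EuclideanSpace ℝ (Fin n))
    (hx : 0 < x i) (hy : 0 < y i) (hxy : ∀ j, j ≠ i → x j = y j) :
    ∫ t in (0:ℝ)..1, ‖derivWithin (fun u => x + u • (y - x)) (Icc (0:ℝ) 1) t‖ *
        ((x + t • (y - x)) i) ^ (-(1 : ℝ) / 2)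
      = 2 * |Real.sqrt (x i) - Real.sqrt (y i)| := by
  set T := x i with hT
  set S := y i with hS
  set c := S - T with hc
  set f : ℝ → ℝ := fun t => T + t * c with hf
  have hcoord : ∀ t : ℝ, (x + t • (y - x)) i = f t := by
    intro t
    simp only [PiLp.add_apply, PiLp.smul_apply, PiLp.sub_apply, smul_eq_mul, hf]
    rfl
  have hfpos : ∀ t ∈ Icc (0:ℝ) 1, 0 < f t := by
    intro t ht
    have : f t = (1 - t) * T + t * S := by simp only [hf, hc]; ring
    rw [this]
    rcases eq_or_lt_of_le ht.1 with h0 | h0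
    · rw [← h0]; simpa using hx
    · exact add_pos_of_nonneg_of_pos (mul_nonneg (by linarith [ht.2]) hx.le) (mul_pos h0 hy)
  have hd : ∀ t : ℝ, HasDerivAt (fun u : ℝ => x + u • (y - x)) (y - x) t := by
    intro t
    simpa using ((hasDerivAt_id t).smul_const (y - x)).const_add x
  have hderivW : ∀ t ∈ Icc (0:ℝ) 1, derivWithin (fun u => x + u • (y - x)) (Icc (0:ℝ) 1) t = y - x :=
    fun t ht => ((hd t).hasDerivWithinAt).derivWithin (uniqueDiffOn_Icc one_pos t ht)
  have hnorm : ‖y - x‖ = |c| := by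
    rw [EuclideanSpace.norm_eq]
    rw [Finset.sum_eq_single i]
    · simp only [PiLp.sub_apply, Real.norm_eq_abs, sq_abs, Real.sqrt_sq_eq_abs]
      rfl
    · intro j _ hj
      simp [PiLp.sub_apply, hxy j hj]
    · intro h; exact absurd (Finset.mem_univ i) h
  -- rewrite the integral
  have h1 : (∫ t in (0:ℝ)..1, ‖derivWithin (fun u => x + u • (y - x)) (Icc (0:ℝ) 1) t‖ *
        ((x + t • (y - x)) i) ^ (-(1 : ℝ) / 2))
      = ∫ t in (0:ℝ)..1, |c| * (f t) ^ (-(1 : ℝ) / 2) := by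
    apply intervalIntegral.integral_congr
    intro t ht
    rw [uIcc_of_le (by norm_num : (0:ℝ) ≤ 1)] at ht
    simp only [hderivW t ht, hnorm, hcoord]
  rw [h1]
  -- FTC for the signed integrand
  have hfd : ∀ t : ℝ, HasDerivAt f c t := by
    intro t
    simpa [hf] using ((hasDerivAt_id t).mul_const c).const_add T
  have key : ∀ t ∈ Ioo (0:ℝ) 1, HasDerivAt (fun u => 2 * Real.sqrt (f u))
      (c * (f t) ^ (-(1:ℝ)/2)) t := by
    intro t ht
    have hft : 0 < f t := hfpos t (Ioo_subset_Icc_self ht)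
    have hsq : HasDerivAt (fun u => Real.sqrt (f u)) (1 / (2 * Real.sqrt (f t)) * c) t :=
      (Real.hasDerivAt_sqrt hft.ne').comp t (hfd t)
    have h2 := hsq.const_mul (2 : ℝ)
    refine h2.congr_deriv (Eq.symm ?_)
    have hs : Real.sqrt (f t) ≠ 0 := (Real.sqrt_pos.mpr hft).ne'
    rw [show (-(1:ℝ)/2) = -(1/2) by ring, Real.rpow_neg hft.le, ← Real.sqrt_eq_rpow]
    field_simp
  have hcontf : ContinuousOn f (Icc (0:ℝ) 1) := (continuous_const.add (continuous_id.mul continuous_const)).continuousOn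
  have hcontint : ContinuousOn (fun t => c * (f t) ^ (-(1:ℝ)/2)) (Icc (0:ℝ) 1) := by
    apply ContinuousOn.mul continuousOn_const
    exact ContinuousOn.rpow_const hcontf (fun t ht => Or.inl (hfpos t ht).ne')
  have hint : IntervalIntegrable (fun t => c * (f t) ^ (-(1:ℝ)/2)) volume 0 1 := by
    apply ContinuousOn.intervalIntegrable
    rwa [uIcc_of_le (by norm_num : (0:ℝ) ≤ 1)]
  have hcont2 : ContinuousOn (fun u => 2 * Real.sqrt (f u)) (Icc (0:ℝ) 1) :=
    continuousOn_const.mul (Real.continuous_sqrt.comp_continuousOn hcontf)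
  have ftc : (∫ t in (0:ℝ)..1, c * (f t) ^ (-(1:ℝ)/2))
      = 2 * Real.sqrt S - 2 * Real.sqrt T := by
    rw [intervalIntegral.integral_eq_sub_of_hasDerivAt_of_le (by norm_num) hcont2 key hint]
    have : f 1 = S := by simp [hf, hc]
    have h0 : f 0 = T := by simp [hf]
    rw [this, h0]
  have hsqmono : ∀ u v : ℝ, 0 ≤ u → u ≤ v → Real.sqrt u ≤ Real.sqrt v := fun u v _ h => Real.sqrt_le_sqrt h
  rcases le_or_gt T S with hTS | hTS
  · have habs : |c| = c := abs_of_nonneg (by simp [hc]; linarith)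
    rw [habs, ftc]
    rw [abs_of_nonpos (by linarith [Real.sqrt_le_sqrt hTS])]
    ring
  · have habs : |c| = -c := abs_of_neg (by simp [hc]; linarith)
    calc (∫ t in (0:ℝ)..1, |c| * (f t) ^ (-(1:ℝ)/2))
        = ∫ t in (0:ℝ)..1, -(c * (f t) ^ (-(1:ℝ)/2)) := by
          apply intervalIntegral.integral_congr
          intro t _
          rw [habs]; ring
      _ = -(2 * Real.sqrt S - 2 * Real.sqrt T) := by rw [intervalIntegral.integral_neg, ftc]
      _ = 2 * |Real.sqrt T - Real.sqrt S| := by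
          rw [abs_of_nonneg (by linarith [Real.sqrt_le_sqrt hTS.le])]
          ring


/-- On vertical lines the intrinsic distance of the upper half-space is
`d((x',t),(x',s)) = 2|√t - √s|`. -/
theorem intrinsicDist_vertical
    (n : ℕ) (hn : 1 ≤ n)
    (x y : EuclideanSpace ℝ (Fin n))
    (hx : 0 < x ⟨n - 1, by omega⟩) (hy : 0 < y ⟨n - 1, by omega⟩)
    (hxy : ∀ i : Fin n, (i : ℕ) < n - 1 → x i = y i) :
    intrinsicDist n hn x y =
      2 * |Real.sqrt (x ⟨n - 1, by omega⟩) - Real.sqrt (y ⟨n - 1, by omega⟩)| := by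
  set i : Fin n := ⟨n - 1, by omega⟩ with hi
  have hxy' : ∀ j : Fin n, j ≠ i → x j = y j := by
    intro j hj
    apply hxy
    have h1 : (j : ℕ) < n := j.2
    have h2 : (j : ℕ) ≠ n - 1 := fun h => hj (Fin.ext h)
    omega
  have hmem : 2 * |Real.sqrt (x i) - Real.sqrt (y i)| ∈
      {L : ℝ | ∃ (a b : ℝ) (γ : ℝ → EuclideanSpace ℝ (Fin n)),
        a ≤ b ∧ ContDiffOn ℝ 1 γ (Icc a b) ∧
        (∀ t ∈ Icc a b, 0 < γ t ⟨n - 1, by omega⟩) ∧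
        γ a = x ∧ γ b = y ∧
        L = ∫ t in a..b, ‖derivWithin γ (Icc a b) t‖ *
              (γ t ⟨n - 1, by omega⟩) ^ (-(1 : ℝ) / 2)} := by
    refine ⟨0, 1, fun u => x + u • (y - x), by norm_num, ?_, ?_, by simp, by
      show x + (1:ℝ) • (y - x) = y; simp, (upper_calc i x y hx hy hxy').symm⟩
    · exact (contDiff_const.add (contDiff_id.smul contDiff_const)).contDiffOn
    · intro t ht
      show 0 < (x + t • (y - x)) i
      have : (x + t • (y - x)) i = (1 - t) * x i + t * y i := by
        simp only [PiLp.add_apply, PiLp.smul_apply, PiLp.sub_apply, smul_eq_mul]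
        ring
      rw [this]
      rcases eq_or_lt_of_le ht.1 with h0 | h0
      · rw [← h0]; simpa using hx
      · exact add_pos_of_nonneg_of_pos (mul_nonneg (by linarith [ht.2]) hx.le) (mul_pos h0 hy)
  have hlb : ∀ L ∈ {L : ℝ | ∃ (a b : ℝ) (γ : ℝ → EuclideanSpace ℝ (Fin n)),
        a ≤ b ∧ ContDiffOn ℝ 1 γ (Icc a b) ∧
        (∀ t ∈ Icc a b, 0 < γ t ⟨n - 1, by omega⟩) ∧
        γ a = x ∧ γ b = y ∧
        L = ∫ t in a..b, ‖derivWithin γ (Icc a b) t‖ *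
              (γ t ⟨n - 1, by omega⟩) ^ (-(1 : ℝ) / 2)},
      2 * |Real.sqrt (x i) - Real.sqrt (y i)| ≤ L := by
    rintro L ⟨a, b, γ, hab, hγ, hpos, ha, hb, rfl⟩
    have := lower_bound i a b γ hab hγ hpos
    rwa [ha, hb] at this
  apply le_antisymm
  · exact csInf_le ⟨_, hlb⟩ hmem
  · exact le_csInf ⟨_, hmem⟩ hlb
end
end

section
/- There exist constants 0 < c ≤ C, depending only on n, such that for all x, y ∈ ℝⁿ₊ with x ≠ y, c |x − y| / √( |x − y| + x_n + y_n ) ≤ d(x, y) ≤ C |x − y| / √( |x − y| + x_n + y_n ), where x_n, y_n denote the n-th coordinates of x and y. -/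
open MeasureTheory Metric Set Filter Topology

noncomputable section

open intervalIntegral


lemma coord_le_norm (n : ℕ) (z : EuclideanSpace ℝ (Fin n)) (i : Fin n) : |z i| ≤ ‖z‖ := by
  rw [EuclideanSpace.norm_eq, ← Real.sqrt_sq_eq_abs]
  apply Real.sqrt_le_sqrt
  simpa [sq_abs] using Finset.single_le_sum (f := fun j => ‖z j‖ ^ 2)
    (fun j _ => sq_nonneg _) (Finset.mem_univ i)

section
variable {E : Type*} [NormedAddCommGroup E] [NormedSpace ℝ E] [CompleteSpace E]

lemma ftc_sub {a b : ℝ} (hab : a < b) {γ : ℝ → E} (hγ : ContDiffOn ℝ 1 γ (Icc a b))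
    {t : ℝ} (ht : t ∈ Icc a b) :
    γ t - γ a = ∫ s in a..t, derivWithin γ (Icc a b) s := by
  have hu : UniqueDiffOn ℝ (Icc a b) := uniqueDiffOn_Icc hab
  have hcont : ContinuousOn (derivWithin γ (Icc a b)) (Icc a b) :=
    hγ.continuousOn_derivWithin hu le_rfl
  refine (integral_eq_sub_of_hasDeriv_right_of_le ht.1
    (hγ.continuousOn.mono (Icc_subset_Icc le_rfl ht.2))
    (fun s hs => ?_) ?_).symm
  · have hsmem : s ∈ Icc a b := ⟨hs.1.le, hs.2.le.trans ht.2⟩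
    have hnhds : Icc a b ∈ nhds s := Icc_mem_nhds hs.1 (lt_of_lt_of_le hs.2 ht.2)
    exact ((((hγ.differentiableOn one_ne_zero) s hsmem).hasDerivWithinAt).hasDerivAt
      hnhds).hasDerivWithinAt
  · exact (hcont.mono (Icc_subset_Icc le_rfl ht.2)).intervalIntegrable_of_Icc ht.1

lemma ftc_norm {a b : ℝ} (hab : a < b) {γ : ℝ → E} (hγ : ContDiffOn ℝ 1 γ (Icc a b))
    {t : ℝ} (ht : t ∈ Icc a b) :
    ‖γ t - γ a‖ ≤ ∫ s in a..t, ‖derivWithin γ (Icc a b) s‖ := by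
  rw [ftc_sub hab hγ ht]
  exact intervalIntegral.norm_integral_le_integral_norm ht.1
end

-- div-sqrt monotonicity
lemma div_sqrt_mono {A r L : ℝ} (hA : 0 ≤ A) (hr : 0 ≤ r) (hrL : r ≤ L) :
    r / Real.sqrt (A + r) ≤ L / Real.sqrt (A + L) := by
  rcases eq_or_lt_of_le (hr.trans hrL) with h0 | hL
  · simp [← h0] at hrL ⊢
    simp [le_antisymm hrL hr]
  have h1 : (0:ℝ) < A + r ∨ 0 ≤ A + r := Or.inr (by linarith)
  have hAL : (0:ℝ) < A + L := by linarith
  have hs1 : Real.sqrt (A + r) ≤ Real.sqrt (A + L) := Real.sqrt_le_sqrt (by linarith)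
  rcases eq_or_lt_of_le hr with h0r | hr'
  · simp [← h0r]
    positivity
  have hsr : (0:ℝ) < Real.sqrt (A + r) := Real.sqrt_pos.2 (by linarith)
  have hsL : (0:ℝ) < Real.sqrt (A + L) := Real.sqrt_pos.2 hAL
  rw [div_le_div_iff₀ hsr hsL]
  have key : r * Real.sqrt (A + L) = Real.sqrt (r^2 * (A + L)) := by
    rw [Real.sqrt_mul (sq_nonneg r), Real.sqrt_sq hr]
  have key2 : L * Real.sqrt (A + r) = Real.sqrt (L^2 * (A + r)) := by
    rw [Real.sqrt_mul (sq_nonneg L), Real.sqrt_sq (hr.trans hrL)]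
  rw [key, key2]
  apply Real.sqrt_le_sqrt
  have e1 : r^2 ≤ L^2 := by nlinarith
  have e2 : r^2*L ≤ L^2*r := by nlinarith [mul_le_mul_of_nonneg_right hrL (mul_nonneg hr hL.le)]
  nlinarith [mul_le_mul_of_nonneg_right e1 hA]

lemma rpow_neg_half_eq {u : ℝ} (hu : 0 ≤ u) : u ^ (-(1:ℝ)/2) = 1 / Real.sqrt u := by
  rw [neg_div, Real.rpow_neg hu, Real.sqrt_eq_rpow]; norm_num

lemma lower_bound_s19 (n : ℕ) (hn : 1 ≤ n) (x y : EuclideanSpace ℝ (Fin n))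
    (hx : 0 < x ⟨n-1, by omega⟩) (hy : 0 < y ⟨n-1, by omega⟩) (hxy : x ≠ y)
    {L : ℝ}
    (hL : ∃ (a b : ℝ) (γ : ℝ → EuclideanSpace ℝ (Fin n)),
      a ≤ b ∧ ContDiffOn ℝ 1 γ (Icc a b) ∧
      (∀ t ∈ Icc a b, 0 < γ t ⟨n - 1, by omega⟩) ∧
      γ a = x ∧ γ b = y ∧
      L = ∫ t in a..b, ‖derivWithin γ (Icc a b) t‖ *
            (γ t ⟨n - 1, by omega⟩) ^ (-(1 : ℝ) / 2)) :
    ‖x - y‖ / Real.sqrt (‖x - y‖ + x ⟨n-1, by omega⟩ + y ⟨n-1, by omega⟩) ≤ L := by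
  obtain ⟨a, b, γ, hab, hγ, hpos, ha, hb, hLe⟩ := hL
  set i : Fin n := ⟨n-1, by omega⟩ with hi
  rcases eq_or_lt_of_le hab with rfl | hab'
  · exact absurd (ha ▸ hb ▸ rfl) hxy
  set g := fun s => ‖derivWithin γ (Icc a b) s‖ with hg
  have hgc : ContinuousOn g (Icc a b) :=
    (hγ.continuousOn_derivWithin (uniqueDiffOn_Icc hab') le_rfl).norm
  set LE := ∫ s in a..b, g s with hLE
  have hr0 : (0:ℝ) < ‖x - y‖ := by
    rw [norm_pos_iff]; exact sub_ne_zero.2 hxy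
  have hrLE : ‖x - y‖ ≤ LE := by
    have h1 := ftc_norm hab' hγ (right_mem_Icc.2 hab)
    rwa [ha, hb, norm_sub_rev] at h1
  have hcoord : ∀ t ∈ Icc a b, γ t i ≤ x i + LE := by
    intro t ht
    have h1 := ftc_norm hab' hγ ht
    rw [ha] at h1
    have hi1 : IntervalIntegrable g MeasureTheory.volume a t :=
      (hgc.mono (Icc_subset_Icc le_rfl ht.2)).intervalIntegrable_of_Icc ht.1
    have hi2 : IntervalIntegrable g MeasureTheory.volume t b :=
      (hgc.mono (Icc_subset_Icc ht.1 le_rfl)).intervalIntegrable_of_Icc ht.2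
    have hadd := integral_add_adjacent_intervals hi1 hi2
    have h3 : 0 ≤ ∫ s in t..b, g s := integral_nonneg ht.2 (fun s _ => norm_nonneg _)
    have h4 : γ t i - x i ≤ ‖γ t - x‖ := by
      calc γ t i - x i ≤ |γ t i - x i| := le_abs_self _
        _ = |(γ t - x) i| := by norm_num
        _ ≤ ‖γ t - x‖ := coord_le_norm n _ i
    have h2 : ∫ s in a..t, g s ≤ LE := by rw [hLE, ← hadd]; linarith
    linarith
  have hconst : ∀ t ∈ Icc a b,
      g t * (x i + LE) ^ (-(1:ℝ)/2) ≤ g t * (γ t i) ^ (-(1:ℝ)/2) := by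
    intro t ht
    exact mul_le_mul_of_nonneg_left
      (Real.rpow_le_rpow_of_nonpos (hpos t ht) (hcoord t ht) (by norm_num))
      (norm_nonneg _)
  have hcont2 : ContinuousOn (fun t => g t * (γ t i) ^ (-(1:ℝ)/2)) (Icc a b) := by
    apply hgc.mul
    exact (((EuclideanSpace.proj i).continuous.comp_continuousOn
      hγ.continuousOn)).rpow_const (fun t ht => Or.inl (ne_of_gt (hpos t ht)))
  have hmono : ∫ t in a..b, g t * (x i + LE) ^ (-(1:ℝ)/2) ≤ L := by
    rw [hLe]
    apply integral_mono_on hab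
    · exact (hgc.mul continuousOn_const).intervalIntegrable_of_Icc hab
    · exact hcont2.intervalIntegrable_of_Icc hab
    · exact hconst
  have hval : ∫ t in a..b, g t * (x i + LE) ^ (-(1:ℝ)/2)
      = LE / Real.sqrt (x i + LE) := by
    rw [intervalIntegral.integral_mul_const, rpow_neg_half_eq (by linarith : (0:ℝ) ≤ x i + LE)]
    ring
  rw [hval] at hmono
  have step1 : ‖x - y‖ / Real.sqrt (‖x - y‖ + x i + y i)
      ≤ ‖x - y‖ / Real.sqrt (x i + ‖x - y‖) := by
    apply div_le_div_of_nonneg_left hr0.le (Real.sqrt_pos.2 (by linarith))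
    exact Real.sqrt_le_sqrt (by linarith)
  have step2 := div_sqrt_mono hx.le hr0.le hrLE
  linarith


lemma sqrt_half : Real.sqrt (1/2) = 1 / Real.sqrt 2 := by
  rw [show (1/2:ℝ) = 2⁻¹ by norm_num, Real.sqrt_inv, one_div]

lemma integ_half : ∫ t in (0:ℝ)..(1/2), t ^ (-(1:ℝ)/2) = Real.sqrt 2 := by
  rw [integral_rpow (Or.inl (by norm_num))]
  rw [show (-(1:ℝ)/2 + 1) = 1/2 by norm_num, Real.zero_rpow (by norm_num),
    ← Real.sqrt_eq_rpow, sqrt_half]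
  have h2 : Real.sqrt 2 ^ 2 = 2 := Real.sq_sqrt (by norm_num)
  have : Real.sqrt 2 ≠ 0 := by positivity
  field_simp
  rw [h2]; ring

lemma ae_ne_const (c : ℝ) : ∀ᵐ t : ℝ ∂volume, t ≠ c := by
  have hvc : volume ({c} : Set ℝ) = 0 := Real.volume_singleton
  rw [MeasureTheory.ae_iff]
  convert hvc using 2
  ext t
  simp

set_option maxHeartbeats 1000000 in
lemma upper_bound (n : ℕ) (hn : 1 ≤ n) (x y : EuclideanSpace ℝ (Fin n))
    (hx : 0 < x ⟨n-1, by omega⟩) (hy : 0 < y ⟨n-1, by omega⟩) (hxy : x ≠ y) :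
    ∃ L : ℝ, (∃ (a b : ℝ) (γ : ℝ → EuclideanSpace ℝ (Fin n)),
      a ≤ b ∧ ContDiffOn ℝ 1 γ (Icc a b) ∧
      (∀ t ∈ Icc a b, 0 < γ t ⟨n - 1, by omega⟩) ∧
      γ a = x ∧ γ b = y ∧
      L = ∫ t in a..b, ‖derivWithin γ (Icc a b) t‖ *
            (γ t ⟨n - 1, by omega⟩) ^ (-(1 : ℝ) / 2)) ∧
    L ≤ 8 * (‖x - y‖ / Real.sqrt (‖x - y‖ + x ⟨n-1, by omega⟩ + y ⟨n-1, by omega⟩)) := by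
  set i : Fin n := ⟨n-1, by omega⟩ with hidef
  set r : ℝ := ‖x - y‖ with hrdef
  have hr0 : (0:ℝ) < r := by rw [hrdef, norm_pos_iff]; exact sub_ne_zero.2 hxy
  set v : EuclideanSpace ℝ (Fin n) := EuclideanSpace.single i (1:ℝ) with hvdef
  set γ : ℝ → EuclideanSpace ℝ (Fin n) :=
    fun t => x + t • (y - x) + (r * (t - t^2)) • v with hγdef
  set D : ℝ → EuclideanSpace ℝ (Fin n) :=
    fun t => (y - x) + (r * (1 - 2*t)) • v with hDdef
  set h : ℝ := r + x i + y i with hhdef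
  have hh0 : (0:ℝ) < h := by rw [hhdef]; linarith
  have hco : ∀ t : ℝ, γ t i = x i + t * (y i - x i) + r * (t - t^2) := by
    intro t
    simp [hγdef, hvdef, EuclideanSpace.single_apply]
  have hder : ∀ t : ℝ, HasDerivAt γ (D t) t := by
    intro t
    have h1 : HasDerivAt (fun t : ℝ => x + t • (y - x)) (y - x) t := by
      simpa using ((hasDerivAt_id t).smul_const (y - x)).const_add x
    have h2 : HasDerivAt (fun t : ℝ => r * (t - t^2)) (r * (1 - 2*t)) t := by
      have := ((hasDerivAt_id t).sub (hasDerivAt_pow 2 t)).const_mul r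
      simpa [mul_comm] using this
    exact h1.add (h2.smul_const v)
  have hcd : ContDiff ℝ 1 γ := by
    apply ContDiff.add
    · exact contDiff_const.add (contDiff_id.smul contDiff_const)
    · exact ((contDiff_const.mul (contDiff_id.sub (contDiff_id.pow 2)))).smul contDiff_const
  have hpos : ∀ t ∈ Icc (0:ℝ) 1, 0 < γ t i := by
    rintro t ⟨ht0, ht1⟩
    rw [hco]
    rcases eq_or_lt_of_le ht1 with rfl | ht1'
    · have : x i + 1 * (y i - x i) + r * (1 - 1^2) = y i := by ring
      rw [this]; exact hy
    · nlinarith [mul_pos (sub_pos.2 ht1') hx, mul_nonneg ht0 hy.le,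
        mul_nonneg (mul_nonneg hr0.le ht0) (sub_nonneg.2 ht1)]
  have hlb : ∀ t ∈ Icc (0:ℝ) 1, h * (t*(1-t)) ≤ γ t i := by
    rintro t ⟨ht0, ht1⟩
    rw [hco, hhdef]
    nlinarith [mul_nonneg (mul_nonneg (sub_nonneg.2 ht1) (sub_nonneg.2 ht1)) hx.le,
      mul_nonneg (mul_nonneg ht0 ht0) hy.le]
  have hDnorm : ∀ t ∈ Icc (0:ℝ) 1, ‖D t‖ ≤ 2*r := by
    rintro t ⟨ht0, ht1⟩
    have h1 : ‖D t‖ ≤ ‖y - x‖ + ‖(r * (1 - 2*t)) • v‖ := norm_add_le _ _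
    have h2 : ‖(r * (1 - 2*t)) • v‖ = |r * (1 - 2*t)| := by
      rw [norm_smul, Real.norm_eq_abs, hvdef, EuclideanSpace.norm_single, norm_one, mul_one]
    have h3 : |r * (1 - 2*t)| ≤ r := by
      rw [abs_mul, abs_of_nonneg hr0.le]
      nlinarith [abs_le.2 (⟨by linarith, by linarith⟩ : -1 ≤ 1 - 2*t ∧ 1 - 2*t ≤ 1)]
    have h4 : ‖y - x‖ = r := by rw [hrdef, norm_sub_rev]
    linarith
  have huD : ∀ t ∈ Icc (0:ℝ) 1, derivWithin γ (Icc 0 1) t = D t := fun t ht =>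
    (hder t).hasDerivWithinAt.derivWithin ((uniqueDiffOn_Icc (by norm_num)) t ht)
  -- the length of the path
  set G : ℝ → ℝ := fun t => ‖D t‖ * (γ t i) ^ (-(1:ℝ)/2) with hGdef
  set L : ℝ := ∫ t in (0:ℝ)..1, ‖derivWithin γ (Icc 0 1) t‖ * (γ t i) ^ (-(1:ℝ)/2)
    with hLdef
  have hLG : L = ∫ t in (0:ℝ)..1, G t := by
    refine integral_congr (fun t ht => ?_)
    rw [uIcc_of_le (by norm_num : (0:ℝ) ≤ 1)] at ht
    rw [hGdef]; simp only []
    rw [huD t ht]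
  have hGcont : ContinuousOn G (Icc (0:ℝ) 1) := by
    apply ContinuousOn.mul
    · exact ((continuous_const.add ((continuous_const.mul
        (continuous_const.sub (continuous_const.mul continuous_id))).smul
        continuous_const)).norm).continuousOn
    · apply ContinuousOn.rpow_const
      · exact ((EuclideanSpace.proj i).continuous.comp
          hcd.continuous).continuousOn
      · exact fun t ht => Or.inl (ne_of_gt (hpos t ht))
  set K : ℝ := 2*r*((h/2) ^ (-(1:ℝ)/2)) with hKdef
  have hi1 : IntervalIntegrable G volume 0 (1/2) :=
    (hGcont.mono (Icc_subset_Icc le_rfl (by norm_num))).intervalIntegrable_of_Icc (by norm_num)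
  have hi2 : IntervalIntegrable G volume (1/2) 1 :=
    (hGcont.mono (Icc_subset_Icc (by norm_num) le_rfl)).intervalIntegrable_of_Icc (by norm_num)
  have hsplit : ∫ t in (0:ℝ)..1, G t = (∫ t in (0:ℝ)..(1/2), G t) + ∫ t in (1/2:ℝ)..1, G t :=
    (integral_add_adjacent_intervals hi1 hi2).symm
  have hGnn : ∀ t ∈ Icc (0:ℝ) 1, G t ≤ 2*r * (γ t i) ^ (-(1:ℝ)/2) := fun t ht =>
    mul_le_mul_of_nonneg_right (hDnorm t ht) (Real.rpow_nonneg (hpos t ht).le _)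
  have key : ∀ t ∈ Icc (0:ℝ) 1, ∀ s : ℝ, 0 < s → (h/2) * s ≤ γ t i →
      G t ≤ K * s ^ (-(1:ℝ)/2) := by
    intro t ht s hs hle
    have h6 : (γ t i) ^ (-(1:ℝ)/2) ≤ ((h/2)*s) ^ (-(1:ℝ)/2) :=
      Real.rpow_le_rpow_of_nonpos (by positivity) hle (by norm_num)
    have h7 : ((h/2)*s) ^ (-(1:ℝ)/2) = (h/2) ^ (-(1:ℝ)/2) * s ^ (-(1:ℝ)/2) :=
      Real.mul_rpow (by positivity) hs.le
    have h8 := hGnn t ht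
    have h9 : 2*r * (γ t i) ^ (-(1:ℝ)/2) ≤ 2*r * ((h/2) ^ (-(1:ℝ)/2) * s ^ (-(1:ℝ)/2)) := by
      rw [← h7]; exact mul_le_mul_of_nonneg_left h6 (by positivity)
    rw [hKdef]; nlinarith [h8, h9]
  have hne0 : ∀ᵐ t : ℝ ∂volume, t ≠ 0 := ae_ne_const 0
  have hne1 : ∀ᵐ t : ℝ ∂volume, t ≠ 1 := ae_ne_const 1
  have hintK : IntervalIntegrable (fun t : ℝ => K * t ^ (-(1:ℝ)/2)) volume 0 (1/2) :=
    (intervalIntegrable_rpow' (by norm_num)).const_mul K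
  have hb1 : ∫ t in (0:ℝ)..(1/2), G t ≤ K * Real.sqrt 2 := by
    have hmono : ∫ t in (0:ℝ)..(1/2), G t ≤ ∫ t in (0:ℝ)..(1/2), K * t ^ (-(1:ℝ)/2) := by
      apply integral_mono_ae_restrict (by norm_num) hi1 hintK
      filter_upwards [ae_restrict_mem measurableSet_Icc, ae_restrict_of_ae hne0]
        with t ht htne
      have ht0 : 0 < t := lt_of_le_of_ne ht.1 (Ne.symm htne)
      have htmem : t ∈ Icc (0:ℝ) 1 := ⟨ht.1, by linarith [ht.2]⟩
      refine key t htmem t ht0 ?_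
      refine le_trans ?_ (hlb t htmem)
      nlinarith [mul_nonneg (mul_nonneg hh0.le ht0.le) (by linarith [ht.2] : (0:ℝ) ≤ 1/2 - t)]
    rw [intervalIntegral.integral_const_mul, integ_half] at hmono
    exact hmono
  have hb2 : ∫ t in (1/2:ℝ)..1, G t ≤ K * Real.sqrt 2 := by
    have hintK2 : IntervalIntegrable (fun t : ℝ => K * (1-t) ^ (-(1:ℝ)/2)) volume (1/2) 1 := by
      have h1 := (hintK.comp_sub_left 1).symm
      rw [show (1:ℝ)-(0:ℝ) = 1 by norm_num, show (1:ℝ)-(1/2:ℝ) = 1/2 by norm_num] at h1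
      exact h1
    have hmono : ∫ t in (1/2:ℝ)..1, G t ≤ ∫ t in (1/2:ℝ)..1, K * (1-t) ^ (-(1:ℝ)/2) := by
      apply integral_mono_ae_restrict (by norm_num) hi2 hintK2
      filter_upwards [ae_restrict_mem measurableSet_Icc, ae_restrict_of_ae hne1]
        with t ht htne
      have ht1 : t < 1 := lt_of_le_of_ne ht.2 htne
      have htmem : t ∈ Icc (0:ℝ) 1 := ⟨by linarith [ht.1], ht.2⟩
      refine key t htmem (1-t) (by linarith) ?_
      refine le_trans ?_ (hlb t htmem)
      nlinarith [mul_nonneg (mul_nonneg hh0.le (by linarith : (0:ℝ) ≤ 1 - t))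
        (by linarith [ht.1] : (0:ℝ) ≤ t - 1/2)]
    have hval : ∫ t in (1/2:ℝ)..1, K * (1-t) ^ (-(1:ℝ)/2) = K * Real.sqrt 2 := by
      have h1 := integral_comp_sub_left (a := (1/2:ℝ)) (b := 1)
        (fun u : ℝ => K * u ^ (-(1:ℝ)/2)) 1
      rw [show (1:ℝ)-(1:ℝ) = 0 by norm_num, show (1:ℝ)-(1/2:ℝ) = 1/2 by norm_num] at h1
      rw [h1, intervalIntegral.integral_const_mul, integ_half]
    rw [hval] at hmono
    exact hmono
  have hfinal : 2 * (K * Real.sqrt 2) = 8 * (r / Real.sqrt h) := by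
    have e1 : Real.sqrt (h/2) * Real.sqrt 2 = Real.sqrt h := by
      rw [← Real.sqrt_mul (by positivity)]; norm_num
    have hs2 : (0:ℝ) < Real.sqrt 2 := by positivity
    have hsh2 : (0:ℝ) < Real.sqrt (h/2) := Real.sqrt_pos.2 (by positivity)
    have hsh : (0:ℝ) < Real.sqrt h := Real.sqrt_pos.2 hh0
    rw [hKdef, rpow_neg_half_eq (by positivity : (0:ℝ) ≤ h/2)]
    rw [← e1]
    field_simp
    nlinarith [Real.sq_sqrt (by norm_num : (0:ℝ) ≤ 2)]
  refine ⟨L, ⟨0, 1, γ, by norm_num, hcd.contDiffOn, hpos, ?_, ?_, hLdef⟩, ?_⟩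
  · simp [hγdef]
  · simp [hγdef]
  · rw [hLG, hsplit]
    calc (∫ t in (0:ℝ)..(1/2), G t) + ∫ t in (1/2:ℝ)..1, G t
        ≤ K * Real.sqrt 2 + K * Real.sqrt 2 := add_le_add hb1 hb2
      _ = 2 * (K * Real.sqrt 2) := by ring
      _ = 8 * (r / Real.sqrt h) := hfinal

/-- Two-sided comparison of the intrinsic distance on the upper half-space:
`d(x,y) ≍ |x-y| / √(|x-y| + x_n + y_n)`, with constants depending only on `n`. -/
theorem intrinsicDist_comparable
    (n : ℕ) (hn : 1 ≤ n) :
    ∃ c C : ℝ, 0 < c ∧ c ≤ C ∧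
      ∀ x y : EuclideanSpace ℝ (Fin n),
        0 < x ⟨n - 1, by omega⟩ → 0 < y ⟨n - 1, by omega⟩ → x ≠ y →
        c * (‖x - y‖ / Real.sqrt (‖x - y‖ + x ⟨n - 1, by omega⟩ + y ⟨n - 1, by omega⟩)) ≤
            intrinsicDist n hn x y ∧
          intrinsicDist n hn x y ≤
            C * (‖x - y‖ / Real.sqrt (‖x - y‖ + x ⟨n - 1, by omega⟩ + y ⟨n - 1, by omega⟩)) := by
  refine ⟨1, 8, one_pos, by norm_num, ?_⟩
  intro x y hx hy hxy
  obtain ⟨L0, hL0mem, hL0le⟩ := upper_bound n hn x y hx hy hxy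
  have hbdd : BddBelow {L : ℝ | ∃ (a b : ℝ) (γ : ℝ → EuclideanSpace ℝ (Fin n)),
      a ≤ b ∧ ContDiffOn ℝ 1 γ (Icc a b) ∧
      (∀ t ∈ Icc a b, 0 < γ t ⟨n - 1, by omega⟩) ∧
      γ a = x ∧ γ b = y ∧
      L = ∫ t in a..b, ‖derivWithin γ (Icc a b) t‖ *
            (γ t ⟨n - 1, by omega⟩) ^ (-(1 : ℝ) / 2)} :=
    ⟨_, fun L hL => lower_bound_s19 n hn x y hx hy hxy hL⟩
  constructor
  · rw [one_mul]
    exact le_csInf ⟨L0, hL0mem⟩ (fun L hL => lower_bound_s19 n hn x y hx hy hxy hL)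
  · exact le_trans (csInf_le hbdd hL0mem) hL0le
end
end
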